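/- arXiv:1203.3209 — 2 statements merged into one kernel-verified Lean document; each statement's English description precedes it below -/
import Mathlib

section
/- (Necessary condition for uniqueness) Suppose a D-dimensional tensor B ∈ ℝ^{p_1×⋯×p_D} has rank R with factor matrices B_d = [β_d^{(1)},…,β_d^{(R)}] ∈ ℝ^{p_d×R}. If the rank-R decomposition B = Σ_{r=1}^R β_1^{(r)}∘⋯∘β_D^{(r)} is unique up to scaling and permutation, then min_{d=1,…,D} rank(B_1 ⊙ ⋯ ⊙ B_{d-1} ⊙ B_{d+1} ⊙ ⋯ ⊙ B_D) = R, which in turn implies that min_{d=1,…,D} ∏_{d'≠d} rank(B_{d'}) ≥ R. -/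
open scoped BigOperators

/-- The tensor `⟦B_1,…,B_D⟧ = Σ_{r=1}^R β_1^{(r)} ∘ ⋯ ∘ β_D^{(r)}` built from factor
matrices `B_d ∈ ℝ^{p_d×R}`, with entries `Σ_r ∏_d B_d(i_d, r)`. -/
def cpTensor {D : ℕ} (p : Fin D → ℕ) (R : ℕ)
    (B : (d : Fin D) → Matrix (Fin (p d)) (Fin R) ℝ) :
    ((d : Fin D) → Fin (p d)) → ℝ :=
  fun i => ∑ r : Fin R, ∏ d : Fin D, B d (i d) r

/-- A tensor has rank `R` if it is a sum of `R` outer products and cannot be written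
as a sum of fewer than `R` outer products. -/
def tensorHasRank {D : ℕ} (p : Fin D → ℕ) (T : ((d : Fin D) → Fin (p d)) → ℝ)
    (R : ℕ) : Prop :=
  (∃ B : (d : Fin D) → Matrix (Fin (p d)) (Fin R) ℝ, cpTensor p R B = T) ∧
    ∀ R' < R, ¬ ∃ B : (d : Fin D) → Matrix (Fin (p d)) (Fin R') ℝ, cpTensor p R' B = T

/-- The rank-`R` decomposition with factor matrices `B_d` is unique up to scaling and
permutation: any other decomposition of the same tensor into `R` outer products agrees
with it after a common permutation `σ` of the ranks and scalings `λ_{d,r}` with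
`∏_d λ_{d,r} = 1`. -/
def uniqueUpToScalingPerm {D : ℕ} (p : Fin D → ℕ) (R : ℕ)
    (B : (d : Fin D) → Matrix (Fin (p d)) (Fin R) ℝ) : Prop :=
  ∀ A : (d : Fin D) → Matrix (Fin (p d)) (Fin R) ℝ,
    cpTensor p R A = cpTensor p R B →
    ∃ (σ : Equiv.Perm (Fin R)) (lam : Fin D → Fin R → ℝ),
      (∀ r : Fin R, ∏ d : Fin D, lam d r = 1) ∧
      ∀ (d : Fin D) (r : Fin R) (i : Fin (p d)), A d i (σ r) = lam d r * B d i r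

/-- The Khatri–Rao product `B_1 ⊙ ⋯ ⊙ B_{d-1} ⊙ B_{d+1} ⊙ ⋯ ⊙ B_D` of all factor
matrices except `B_d`: its `r`-th column is the columnwise Kronecker (outer) product of
the `r`-th columns `β_{d'}^{(r)}`, `d' ≠ d`, with rows indexed by the multi-indices of
the remaining modes. -/
def khatriRaoSkip {D : ℕ} (p : Fin D → ℕ) (R : ℕ)
    (B : (d : Fin D) → Matrix (Fin (p d)) (Fin R) ℝ) (d : Fin D) :
    Matrix ((d' : {x : Fin D // x ≠ d}) → Fin (p d'.1)) (Fin R) ℝ :=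
  Matrix.of fun j r => ∏ d' : {x : Fin D // x ≠ d}, B d'.1 (j d') r


open Matrix

/-- Any matrix factors through `Fin M.rank`. -/
lemma rank_factor {m n : Type*} [Fintype m] [Fintype n] (M : Matrix m n ℝ) :
    ∃ (P : Matrix m (Fin M.rank) ℝ) (Q : Matrix (Fin M.rank) n ℝ), M = P * Q := by
  classical
  set V : Submodule ℝ (m → ℝ) := Submodule.span ℝ (Set.range Mᵀ) with hV
  have hr : Module.finrank ℝ V = M.rank := M.rank_eq_finrank_span_cols.symm
  let b : Module.Basis (Fin M.rank) ℝ V := (Module.finBasis ℝ V).reindex (finCongr hr)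
  have hmem : ∀ r : n, Mᵀ r ∈ V := fun r => Submodule.subset_span ⟨r, rfl⟩
  refine ⟨fun i s => (b s : m → ℝ) i,
    fun s r => b.repr ⟨Mᵀ r, hmem r⟩ s, ?_⟩
  ext i r
  have h1 : (⟨Mᵀ r, hmem r⟩ : V) = ∑ s, b.repr ⟨Mᵀ r, hmem r⟩ s • b s :=
    (b.sum_repr _).symm
  have h2 := congrArg (fun v : V => (v : m → ℝ) i) h1
  simp only [Submodule.coe_sum, SetLike.val_smul, Finset.sum_apply, Pi.smul_apply,
    smul_eq_mul] at h2
  show M i r = ∑ s, (b s : m → ℝ) i * b.repr ⟨Mᵀ r, hmem r⟩ s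
  rw [show M i r = Mᵀ r i from rfl, h2]
  exact Finset.sum_congr rfl fun s _ => mul_comm _ _

lemma kr_rank_eq {D R : ℕ} (hD : 0 < D) (p : Fin D → ℕ)
    (B : (d : Fin D) → Matrix (Fin (p d)) (Fin R) ℝ)
    (hrank : tensorHasRank p (cpTensor p R B) R) (d : Fin D) :
    (khatriRaoSkip p R B d).rank = R := by
  classical
  refine le_antisymm
    ((khatriRaoSkip p R B d).rank_le_card_width.trans_eq (Fintype.card_fin R)) ?_
  by_contra hlt
  push_neg at hlt
  set M := khatriRaoSkip p R B d with hM
  -- kernel of mulVecLin is nontrivial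
  have hker : LinearMap.ker M.mulVecLin ≠ ⊥ := by
    intro hk
    have h := LinearMap.finrank_range_add_finrank_ker M.mulVecLin
    rw [hk, finrank_bot, add_zero] at h
    rw [show Module.finrank ℝ (LinearMap.range M.mulVecLin) = M.rank from rfl] at h
    rw [Module.finrank_pi] at h
    simp [Fintype.card_fin] at h
    omega
  obtain ⟨c, hcmem, hc0⟩ := Submodule.exists_mem_ne_zero_of_ne_bot hker
  have hc : ∀ j, ∑ r : Fin R, M j r * c r = 0 := by
    intro j
    have := LinearMap.mem_ker.mp hcmem
    have := congrFun this j
    simpa [Matrix.mulVecLin_apply, Matrix.mulVec, dotProduct] using this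
  obtain ⟨r0, hr0⟩ : ∃ r0, c r0 ≠ 0 := Function.ne_iff.mp hc0
  -- R must be positive
  obtain ⟨R', rfl⟩ : ∃ R', R = R' + 1 := ⟨R - 1, by omega⟩
  -- modified factor matrix at mode d, zeroing out column r0
  set Ad : Matrix (Fin (p d)) (Fin (R' + 1)) ℝ :=
    fun i r => B d i r - (B d i r0 / c r0) * c r with hAd
  set A := Function.update B d Ad with hA
  have hAne : ∀ d' : Fin D, d' ≠ d → A d' = B d' := fun d' h =>
    Function.update_of_ne h _ _
  have hAd0 : ∀ i, A d i r0 = 0 := by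
    intro i
    rw [hA, Function.update_self, hAd]
    field_simp
    ring
  -- product splitting
  have hsplit : ∀ (C : (d : Fin D) → Matrix (Fin (p d)) (Fin (R' + 1)) ℝ)
      (i : (d : Fin D) → Fin (p d)) (r : Fin (R' + 1)),
      ∏ d'' : Fin D, C d'' (i d'') r
        = C d (i d) r * ∏ d'' ∈ Finset.univ.erase d, C d'' (i d'') r :=
    fun C i r => (Finset.mul_prod_erase Finset.univ _ (Finset.mem_univ d)).symm
  have herase : ∀ (i : (d : Fin D) → Fin (p d)) (r : Fin (R' + 1)),
      ∏ d'' ∈ Finset.univ.erase d, B d'' (i d'') r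
        = M (fun d' : {x : Fin D // x ≠ d} => i d'.1) r := by
    intro i r
    show ∏ d'' ∈ Finset.univ.erase d, B d'' (i d'') r
        = ∏ d' : {x : Fin D // x ≠ d}, B d'.1 (i d'.1) r
    exact Finset.prod_subtype _ (fun x => by simp) _
  -- cpTensor A = cpTensor B
  have hAB : cpTensor p (R' + 1) A = cpTensor p (R' + 1) B := by
    funext i
    set j : (d' : {x : Fin D // x ≠ d}) → Fin (p d'.1) := fun d' => i d'.1 with hj
    set w : ℝ := B d (i d) r0 / c r0 with hw
    have key : ∑ r : Fin (R' + 1), w * c r * M j r = 0 := by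
      have h1 : ∀ r : Fin (R' + 1), w * c r * M j r = w * (M j r * c r) := fun r => by ring
      rw [Finset.sum_congr rfl fun r _ => h1 r, ← Finset.mul_sum, hc j, mul_zero]
    show (∑ r : Fin (R' + 1), ∏ d'' : Fin D, A d'' (i d'') r)
        = ∑ r : Fin (R' + 1), ∏ d'' : Fin D, B d'' (i d'') r
    have hterm : ∀ r : Fin (R' + 1), ∏ d'' : Fin D, A d'' (i d'') r
        = B d (i d) r * M j r - w * c r * M j r := by
      intro r
      rw [hsplit A i r,
        Finset.prod_congr rfl (fun d'' hd'' => by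
          rw [hAne _ (Finset.ne_of_mem_erase hd'')]),
        herase i r]
      have : A d (i d) r = B d (i d) r - w * c r := by
        rw [hA, Function.update_self]
      rw [this]; ring
    have hterm' : ∀ r : Fin (R' + 1), ∏ d'' : Fin D, B d'' (i d'') r
        = B d (i d) r * M j r := by
      intro r
      rw [hsplit B i r, herase i r]
    rw [Finset.sum_congr rfl fun r _ => hterm r, Finset.sum_sub_distrib, key, sub_zero,
      Finset.sum_congr rfl fun r _ => hterm' r]
  -- build an R'-term decomposition, contradiction
  refine hrank.2 R' (Nat.lt_succ_self R') ⟨fun d'' => fun i s => A d'' i (r0.succAbove s), ?_⟩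
  rw [← hAB]
  funext i
  show ∑ s : Fin R', ∏ d'' : Fin D, A d'' (i d'') (r0.succAbove s)
      = ∑ r : Fin (R' + 1), ∏ d'' : Fin D, A d'' (i d'') r
  rw [Fin.sum_univ_succAbove (fun r => ∏ d'' : Fin D, A d'' (i d'') r) r0,
    Finset.prod_eq_zero (Finset.mem_univ d) (hAd0 (i d)), zero_add]

lemma kr_rank_le {D R : ℕ} (p : Fin D → ℕ)
    (B : (d : Fin D) → Matrix (Fin (p d)) (Fin R) ℝ) (d : Fin D) :
    (khatriRaoSkip p R B d).rank ≤ ∏ d' : {x : Fin D // x ≠ d}, (B d'.1).rank := by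
  classical
  choose P Q hPQ using fun d' : {x : Fin D // x ≠ d} => rank_factor (B d'.1)
  set κ := (d' : {x : Fin D // x ≠ d}) → Fin ((B d'.1).rank) with hκ
  set BigP : Matrix ((d' : {x : Fin D // x ≠ d}) → Fin (p d'.1)) κ ℝ :=
    fun j s => ∏ d', P d' (j d') (s d') with hBigP
  set BigQ : Matrix κ (Fin R) ℝ := fun s r => ∏ d', Q d' (s d') r with hBigQ
  have hfac : khatriRaoSkip p R B d = BigP * BigQ := by
    ext j r
    show ∏ d' : {x : Fin D // x ≠ d}, B d'.1 (j d') r = ∑ s : κ, BigP j s * BigQ s r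
    have h1 : ∀ d' : {x : Fin D // x ≠ d},
        B d'.1 (j d') r = ∑ s : Fin ((B d'.1).rank), P d' (j d') s * Q d' s r := by
      intro d'
      have h := congrFun (congrFun (hPQ d') (j d')) r
      rw [h]
      simp [Matrix.mul_apply]
    rw [Finset.prod_congr rfl fun d' _ => h1 d']
    rw [Finset.prod_univ_sum]
    refine Finset.sum_congr rfl fun s _ => ?_
    rw [Finset.prod_mul_distrib]
  calc (khatriRaoSkip p R B d).rank ≤ BigP.rank := by rw [hfac]; exact rank_mul_le_left _ _
    _ ≤ Fintype.card κ := rank_le_card_width _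
    _ = ∏ d' : {x : Fin D // x ≠ d}, (B d'.1).rank := by
        rw [show Fintype.card κ = ∏ d' : {x : Fin D // x ≠ d}, Fintype.card (Fin ((B d'.1).rank))
          from Fintype.card_pi]
        exact Finset.prod_congr rfl fun d' _ => Fintype.card_fin _

/-- **Necessary condition for uniqueness of the CP decomposition.**
If the rank-`R` decomposition `B = Σ_{r=1}^R β_1^{(r)}∘⋯∘β_D^{(r)}` of a rank-`R` tensor
is unique up to scaling and permutation, then
`min_{d} rank(B_1 ⊙ ⋯ ⊙ B_{d-1} ⊙ B_{d+1} ⊙ ⋯ ⊙ B_D) = R`, which in turn implies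
`min_{d} ∏_{d'≠d} rank(B_{d'}) ≥ R`. -/
theorem stmt10 {D R : ℕ} (hD : 0 < D) (p : Fin D → ℕ)
    (B : (d : Fin D) → Matrix (Fin (p d)) (Fin R) ℝ)
    (hrank : tensorHasRank p (cpTensor p R B) R)
    (huniq : uniqueUpToScalingPerm p R B) :
    (⨅ d : Fin D, (khatriRaoSkip p R B d).rank) = R ∧
    R ≤ ⨅ d : Fin D, ∏ d' : {x : Fin D // x ≠ d}, (B d'.1).rank := by
  have h1 : ∀ d : Fin D, (khatriRaoSkip p R B d).rank = R := kr_rank_eq hD p B hrank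
  have : Nonempty (Fin D) := Fin.pos_iff_nonempty.mp hD
  refine ⟨?_, ?_⟩
  · simp only [h1]
    exact ciInf_const
  · refine le_ciInf fun d => ?_
    have h := kr_rank_le p B d
    rw [h1 d] at h
    exact h
end

section
/- (Global convergence of block relaxation) Let E_1,…,E_m be finite-dimensional real normed vector spaces and ℓ : E_1 × ⋯ × E_m → ℝ a differentiable objective function. Assume: (i) ℓ is continuous, bounded above, and coercive in the sense that the superlevel set {θ : ℓ(θ) ≥ ℓ(θ^{(0)})} is compact for the initial point θ^{(0)}; (ii) for each block index j and each fixed value of the other blocks, the function of the j-th block alone attains a unique maximizer (e.g., it is strictly concave); (iii) the stationary points of ℓ (points where the gradient of ℓ vanishes) are isolated. Let (θ^{(t)}) be the sequence generated by cyclically updating each block to the maximizer of ℓ over that block with the other blocks held at their current values. Then the sequence θ^{(t)} converges to a stationary point of ℓ. -/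
open scoped BigOperators

set_option maxHeartbeats 1000000 in

/-- **Global convergence of the block relaxation (cyclic block ascent) algorithm.**
Let `ℓ` be a differentiable objective on a finite product of finite-dimensional real
normed spaces `E_1 × ⋯ × E_m`.  Assume (i) `ℓ` is continuous, bounded above, and coercive
(the superlevel set of the initial point is compact); (ii) each block update has a unique
maximizer; (iii) the stationary points of `ℓ` are isolated.  If `θ^{(t)}` is generated by
cyclically updating each block to the maximizer of `ℓ` over that block with the other
blocks held fixed (the intermediate states being `φ t 0 = θ^{(t)}, …, φ t m = θ^{(t+1)}`),
then `θ^{(t)}` converges to a stationary point of `ℓ`. -/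
theorem stmt17 (m : ℕ) (E : Fin m → Type*)
    [∀ j, NormedAddCommGroup (E j)] [∀ j, NormedSpace ℝ (E j)]
    [∀ j, FiniteDimensional ℝ (E j)]
    (ℓ : ((j : Fin m) → E j) → ℝ)
    (hdiff : Differentiable ℝ ℓ)
    (hcont : Continuous ℓ)
    (hbdd : BddAbove (Set.range ℓ))
    (θ : ℕ → (j : Fin m) → E j)
    (hcoercive : IsCompact {θ' : (j : Fin m) → E j | ℓ (θ 0) ≤ ℓ θ'})
    (hunique : ∀ (j : Fin m) (θ' : (j : Fin m) → E j),
      ∃! x : E j, ∀ y : E j,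
        ℓ (Function.update θ' j y) ≤ ℓ (Function.update θ' j x))
    (hisolated : ∀ θ₁ : (j : Fin m) → E j, fderiv ℝ ℓ θ₁ = 0 →
      ∃ ε > 0, ∀ θ₂ : (j : Fin m) → E j,
        fderiv ℝ ℓ θ₂ = 0 → dist θ₂ θ₁ < ε → θ₂ = θ₁)
    (φ : ℕ → Fin (m + 1) → (j : Fin m) → E j)
    (hφ0 : ∀ t, φ t 0 = θ t)
    (hφlast : ∀ t, φ t (Fin.last m) = θ (t + 1))
    (hupdate : ∀ (t : ℕ) (j : Fin m),
      (∀ k : Fin m, k ≠ j → φ t j.succ k = φ t j.castSucc k) ∧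
      (∀ y : E j, ℓ (Function.update (φ t j.castSucc) j y) ≤ ℓ (φ t j.succ))) :
    ∃ θlim : (j : Fin m) → E j,
      Filter.Tendsto θ Filter.atTop (nhds θlim) ∧ fderiv ℝ ℓ θlim = 0 := by
  classical
  -- single block update increases ℓ
  have hstep : ∀ (t : ℕ) (j : Fin m), ℓ (φ t j.castSucc) ≤ ℓ (φ t j.succ) := by
    intro t j
    have h := (hupdate t j).2 (φ t j.castSucc j)
    rwa [Function.update_eq_self] at h
  have hmono_i : ∀ (t : ℕ) (i : Fin (m+1)), ℓ (θ t) ≤ ℓ (φ t i) := by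
    intro t i
    induction i using Fin.induction with
    | zero => rw [hφ0]
    | succ j ih => exact ih.trans (hstep t j)
  have hmono_i' : ∀ (t : ℕ) (i : Fin (m+1)), ℓ (φ t i) ≤ ℓ (θ (t+1)) := by
    intro t i
    induction i using Fin.reverseInduction with
    | last => rw [hφlast]
    | cast j ih => exact (hstep t j).trans ih
  have hθmono : Monotone (fun t => ℓ (θ t)) := by
    apply monotone_nat_of_le_succ
    intro t
    have := hmono_i' t 0
    rwa [hφ0] at this
  have hK : ∀ (t : ℕ) (i : Fin (m+1)), ℓ (θ 0) ≤ ℓ (φ t i) := by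
    intro t i
    exact (hθmono (Nat.zero_le t)).trans (hmono_i t i)
  -- the limit value
  have hbdd' : BddAbove (Set.range fun t => ℓ (θ t)) :=
    hbdd.mono (Set.range_comp_subset_range θ ℓ)
  set L : ℝ := ⨆ t, ℓ (θ t) with hLdef
  have hLθ : Filter.Tendsto (fun t => ℓ (θ t)) Filter.atTop (nhds L) :=
    tendsto_atTop_ciSup hθmono hbdd'
  -- continuity of the update-in-block map
  have hcu : ∀ (j : Fin m) (y : E j),
      Continuous (fun θ' : (j : Fin m) → E j => Function.update θ' j y) := by
    intro j y
    apply continuous_pi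
    intro k
    by_cases h : k = j
    · subst h
      simp only [Function.update_self]
      exact continuous_const
    · simp only [Function.update_of_ne h]
      exact continuous_apply k
  -- KEY LEMMA
  have key : ∀ s : ℕ → ℕ, StrictMono s → ∃ σ : ℕ → ℕ, StrictMono σ ∧
      ∃ a : (j : Fin m) → E j,
        Filter.Tendsto (fun k => θ (s (σ k))) Filter.atTop (nhds a) ∧
        Filter.Tendsto (fun k => θ (s (σ k) + 1)) Filter.atTop (nhds a) ∧
        fderiv ℝ ℓ a = 0 := by
    intro s hs
    have hKpi : IsCompact (Set.univ.pi
        (fun _ : Fin (m+1) => {θ' : (j : Fin m) → E j | ℓ (θ 0) ≤ ℓ θ'})) :=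
      isCompact_univ_pi (fun _ => hcoercive)
    obtain ⟨a, -, σ, hσ, hconv⟩ := hKpi.tendsto_subseq
      (x := fun k => fun i => φ (s k) i)
      (fun k => by
        rw [Set.mem_univ_pi]
        intro i
        exact hK (s k) i)
    have hci : ∀ i : Fin (m+1),
        Filter.Tendsto (fun k => φ (s (σ k)) i) Filter.atTop (nhds (a i)) :=
      fun i => tendsto_pi_nhds.mp hconv i
    have hsσ : Filter.Tendsto (fun k => s (σ k)) Filter.atTop Filter.atTop :=
      (hs.comp hσ).tendsto_atTop
    have hlow : Filter.Tendsto (fun k => ℓ (θ (s (σ k)))) Filter.atTop (nhds L) :=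
      hLθ.comp hsσ
    have hhigh : Filter.Tendsto (fun k => ℓ (θ (s (σ k) + 1))) Filter.atTop (nhds L) :=
      hLθ.comp (Filter.tendsto_atTop_mono (fun k => Nat.le_succ (s (σ k))) hsσ)
    -- all blockwise limits have value L
    have hℓai : ∀ i : Fin (m+1), ℓ (a i) = L := by
      intro i
      have h1 : Filter.Tendsto (fun k => ℓ (φ (s (σ k)) i)) Filter.atTop (nhds (ℓ (a i))) :=
        (hcont.tendsto _).comp (hci i)
      have h2 : Filter.Tendsto (fun k => ℓ (φ (s (σ k)) i)) Filter.atTop (nhds L) :=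
        tendsto_of_tendsto_of_tendsto_of_le_of_le hlow hhigh
          (fun k => hmono_i (s (σ k)) i) (fun k => hmono_i' (s (σ k)) i)
      exact tendsto_nhds_unique h1 h2
    -- block maximization at the limit
    have hmaxle : ∀ (j : Fin m) (y : E j), ℓ (Function.update (a j.castSucc) j y) ≤ L := by
      intro j y
      have h1 : Filter.Tendsto (fun k => ℓ (Function.update (φ (s (σ k)) j.castSucc) j y))
          Filter.atTop (nhds (ℓ (Function.update (a j.castSucc) j y))) :=
        ((hcont.comp (hcu j y)).tendsto _).comp (hci j.castSucc)
      have h2 : Filter.Tendsto (fun k => ℓ (φ (s (σ k)) j.succ)) Filter.atTop (nhds L) := by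
        have := (hcont.tendsto _).comp (hci j.succ)
        rwa [hℓai j.succ] at this
      exact le_of_tendsto_of_tendsto' h1 h2
        (fun k => (hupdate (s (σ k)) j).2 y)
    have hagree : ∀ (j : Fin m) (k' : Fin m), k' ≠ j → a j.succ k' = a j.castSucc k' := by
      intro j k' hne
      have h1 : Filter.Tendsto (fun k => φ (s (σ k)) j.succ k') Filter.atTop
          (nhds (a j.succ k')) := ((continuous_apply k').tendsto _).comp (hci j.succ)
      have h2 : Filter.Tendsto (fun k => φ (s (σ k)) j.succ k') Filter.atTop
          (nhds (a j.castSucc k')) := by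
        have h2' : Filter.Tendsto (fun k => φ (s (σ k)) j.castSucc k') Filter.atTop
            (nhds (a j.castSucc k')) := ((continuous_apply k').tendsto _).comp (hci j.castSucc)
        refine h2'.congr (fun k => ?_)
        exact ((hupdate (s (σ k)) j).1 k' hne).symm
      exact tendsto_nhds_unique h1 h2
    have hsucc_eq : ∀ j : Fin m, a j.succ = a j.castSucc := by
      intro j
      have h1 : Function.update (a j.castSucc) j (a j.succ j) = a j.succ := by
        funext k'
        by_cases h : k' = j
        · subst h
          simp
        · rw [Function.update_of_ne h]
          exact (hagree j k' h).symm
      obtain ⟨x, -, huniq⟩ := hunique j (a j.castSucc)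
      have e1 : a j.succ j = x := by
        apply huniq
        intro y
        rw [h1, hℓai j.succ]
        exact hmaxle j y
      have e2 : a j.castSucc j = x := by
        apply huniq
        intro y
        rw [Function.update_eq_self, hℓai j.castSucc]
        exact hmaxle j y
      rw [← h1, e1, ← e2, Function.update_eq_self]
    have haconst : ∀ i : Fin (m+1), a i = a 0 := by
      intro i
      induction i using Fin.induction with
      | zero => rfl
      | succ j ih => rw [hsucc_eq j]; exact ih
    -- the limit is a blockwise maximizer of ℓ
    have hmax0 : ∀ (j : Fin m) (y : E j), ℓ (Function.update (a 0) j y) ≤ ℓ (a 0) := by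
      intro j y
      have h := hmaxle j y
      rw [haconst j.castSucc] at h
      rw [hℓai 0]
      exact h
    -- stationarity
    have hstat : fderiv ℝ ℓ (a 0) = 0 := by
      have hpart : ∀ (j : Fin m) (v : E j), fderiv ℝ ℓ (a 0) (Pi.single j v) = 0 := by
        intro j v
        have hloc : IsLocalMax (fun y => ℓ (Function.update (a 0) j y)) (a 0 j) :=
          Filter.Eventually.of_forall (fun y => by
            show ℓ (Function.update (a 0) j y) ≤ ℓ (Function.update (a 0) j (a 0 j))
            rw [Function.update_eq_self]
            exact hmax0 j y)
        have hder : HasFDerivAt (fun y => ℓ (Function.update (a 0) j y))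
            ((fderiv ℝ ℓ (a 0)).comp
              (ContinuousLinearMap.pi (Pi.single j (ContinuousLinearMap.id ℝ (E j)))))
            (a 0 j) := by
          have h1 := hasFDerivAt_update (𝕜 := ℝ) (a 0) (i := j) (a 0 j)
          have h2 : HasFDerivAt ℓ (fderiv ℝ ℓ (a 0)) (Function.update (a 0) j (a 0 j)) := by
            rw [Function.update_eq_self]
            exact (hdiff (a 0)).hasFDerivAt
          exact h2.comp (a 0 j) h1
        have hz := hloc.hasFDerivAt_eq_zero hder
        have := congrFun (congrArg DFunLike.coe hz) v
        simp only [ContinuousLinearMap.comp_apply, ContinuousLinearMap.zero_apply] at this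
        rw [← this]
        congr 1
        funext k
        by_cases h : k = j
        · subst h; simp
        · simp [Pi.single_eq_of_ne h, ContinuousLinearMap.pi_apply,
            Pi.single, Function.update_of_ne h]
      ext v
      have hv : v = ∑ j : Fin m, Pi.single j (v j) := (Finset.univ_sum_single v).symm
      rw [ContinuousLinearMap.zero_apply, hv, map_sum]
      exact Finset.sum_eq_zero (fun j _ => hpart j (v j))
    refine ⟨σ, hσ, a 0, ?_, ?_, hstat⟩
    · have := hci 0
      refine this.congr (fun k => ?_)
      exact hφ0 (s (σ k))
    · have := hci (Fin.last m)
      rw [haconst (Fin.last m)] at this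
      refine this.congr (fun k => ?_)
      exact hφlast (s (σ k))
  -- steps go to zero
  have hstep0 : Filter.Tendsto (fun t => dist (θ (t+1)) (θ t)) Filter.atTop (nhds 0) := by
    by_contra hnot
    have hfr : ∃ ε > 0, ∃ᶠ t in Filter.atTop, ε ≤ dist (θ (t+1)) (θ t) := by
      by_contra h
      push_neg at h
      apply hnot
      rw [Metric.tendsto_atTop]
      intro ε hε
      have h' := h ε hε
      rw [Filter.eventually_atTop] at h'
      obtain ⟨N, hN⟩ := h'
      refine ⟨N, fun n hn => ?_⟩
      have := hN n hn
      rw [Real.dist_eq, sub_zero, abs_of_nonneg dist_nonneg]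
      exact this
    obtain ⟨ε, hε, hfreq⟩ := hfr
    obtain ⟨s, hs, hsp⟩ := Filter.extraction_of_frequently_atTop hfreq
    obtain ⟨σ, hσ, a, h1, h2, -⟩ := key s hs
    have hd : Filter.Tendsto (fun k => dist (θ (s (σ k) + 1)) (θ (s (σ k))))
        Filter.atTop (nhds (dist a a)) := h2.dist h1
    rw [dist_self] at hd
    have hle : ε ≤ 0 := ge_of_tendsto' hd (fun k => hsp (σ k))
    linarith
  -- main argument
  obtain ⟨σ0, hσ0, a, ha1, -, hstatA⟩ := key id strictMono_id
  obtain ⟨ε, hε, hiso⟩ := hisolated a hstatA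
  refine ⟨a, ?_, hstatA⟩
  by_contra hnc
  have hfar : ∃ δ > 0, ∃ᶠ t in Filter.atTop, δ ≤ dist (θ t) a := by
    by_contra h
    push_neg at h
    apply hnc
    rw [Metric.tendsto_atTop]
    intro ε' hε'
    have h' := h ε' hε'
    rw [Filter.eventually_atTop] at h'
    obtain ⟨N, hN⟩ := h'
    refine ⟨N, fun n hn => ?_⟩
    have := hN n hn
    exact this
  obtain ⟨δ, hδ, hfarf⟩ := hfar
  set ρ : ℝ := min δ ε / 2 with hρdef
  have hρ : 0 < ρ := by positivity
  have hρδ : ρ < δ := by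
    have : min δ ε ≤ δ := min_le_left _ _
    simp only [hρdef]
    linarith
  have hρε : ρ < ε := by
    have : min δ ε ≤ ε := min_le_right _ _
    simp only [hρdef]
    linarith
  -- steps eventually small
  have hsmall : ∀ᶠ t in Filter.atTop, dist (θ (t+1)) (θ t) < ρ/4 := by
    exact hstep0.eventually_lt_const (by positivity)
  obtain ⟨N0, hN0⟩ := Filter.eventually_atTop.mp hsmall
  -- frequently the sequence lies in the annulus around `a`
  have hann : ∃ᶠ t in Filter.atTop, 3*ρ/4 ≤ dist (θ t) a ∧ dist (θ t) a ≤ ρ := by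
    rw [Filter.frequently_atTop]
    intro N
    obtain ⟨k0, hk0⟩ := Metric.tendsto_atTop.mp ha1 (ρ/2) (by positivity)
    set k : ℕ := max k0 (max N N0) with hkdef
    set t1 : ℕ := σ0 k with ht1def
    have hkk : k ≤ t1 := hσ0.id_le k
    have ht1close : dist (θ t1) a < ρ/2 := by
      have := hk0 k (le_max_left _ _)
      simpa [ht1def] using this
    have ht1N : N ≤ t1 := le_trans (le_trans (le_max_left _ _) (le_max_right _ _)) hkk
    have ht1N0 : N0 ≤ t1 := le_trans (le_trans (le_max_right _ _) (le_max_right _ _)) hkk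
    obtain ⟨t2, ht2ge, ht2far⟩ := Filter.frequently_atTop.mp hfarf t1
    have hp : ∃ n, t1 ≤ n ∧ 3*ρ/4 < dist (θ n) a :=
      ⟨t2, ht2ge, lt_of_lt_of_le (by linarith) ht2far⟩
    let u := Nat.find hp
    have hu : t1 ≤ u ∧ 3*ρ/4 < dist (θ u) a := Nat.find_spec hp
    have hu1 : t1 < u := by
      rcases lt_or_eq_of_le hu.1 with h | h
      · exact h
      · exfalso
        have := hu.2
        rw [← h] at this
        linarith
    have hprev : ¬(t1 ≤ u - 1 ∧ 3*ρ/4 < dist (θ (u-1)) a) :=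
      Nat.find_min hp (by omega)
    have hprev2 : dist (θ (u-1)) a ≤ 3*ρ/4 := by
      by_contra hc
      push_neg at hc
      exact hprev ⟨by omega, hc⟩
    have hstepu : dist (θ ((u-1)+1)) (θ (u-1)) < ρ/4 := hN0 (u-1) (by omega)
    have huu : (u-1)+1 = u := by omega
    rw [huu] at hstepu
    have hub : dist (θ u) a ≤ dist (θ u) (θ (u-1)) + dist (θ (u-1)) a := dist_triangle _ _ _
    refine ⟨u, by omega, le_of_lt hu.2, ?_⟩
    linarith
  -- extract a stationary limit point inside the annulus: contradiction with isolation
  obtain ⟨s, hs, hsann⟩ := Filter.extraction_of_frequently_atTop hann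
  obtain ⟨σ, hσ', c, hc1, -, hcstat⟩ := key s hs
  have hdc : Filter.Tendsto (fun k => dist (θ (s (σ k))) a) Filter.atTop (nhds (dist c a)) :=
    hc1.dist tendsto_const_nhds
  have h3 : 3*ρ/4 ≤ dist c a := ge_of_tendsto' hdc (fun k => (hsann (σ k)).1)
  have h4 : dist c a ≤ ρ := le_of_tendsto' hdc (fun k => (hsann (σ k)).2)
  have hca : c = a := hiso c hcstat (lt_of_le_of_lt h4 hρε)
  rw [hca, dist_self] at h3
  linarith
end
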